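/- arXiv:1608.08379 — 6 statements merged into one kernel-verified Lean document; each statement's English description precedes it below -/
import Mathlib

section
/- For every ℓ > 0, the function b_ℓ(s) = 2ℓ(1−s)·min(1, exp(ℓ²(s−1)/2)) is globally Lipschitz continuous on ℝ; it is bounded above, namely b_ℓ(s) ≤ 4/(e·ℓ) for all s ∈ ℝ; and it is not bounded below: for every M > 0 there exists s ∈ ℝ with b_ℓ(s) < −M. -/
/-- For ℓ > 0 define b_ℓ(s) := 2ℓ(1−s)·min(1, exp(ℓ²(s−1)/2)). -/
noncomputable def bFun (l s : ℝ) : ℝ := 2 * l * (1 - s) * min 1 (Real.exp (l ^ 2 * (s - 1) / 2))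

lemma bFun_of_ge (l : ℝ) {s : ℝ} (hs : 1 ≤ s) : bFun l s = 2 * l * (1 - s) := by
  unfold bFun
  rw [min_eq_left, mul_one]
  have h1 : (0:ℝ) ≤ s - 1 := by linarith
  have : (0:ℝ) ≤ l ^ 2 * (s - 1) / 2 := by positivity
  exact Real.one_le_exp this

lemma bFun_of_le (l : ℝ) {s : ℝ} (hs : s ≤ 1) :
    bFun l s = 2 * l * (1 - s) * Real.exp (l ^ 2 * (s - 1) / 2) := by
  unfold bFun
  rw [min_eq_right]
  rw [Real.exp_le_one_iff]
  nlinarith [sq_nonneg l]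

lemma bFun_hasDerivAt (l x : ℝ) :
    HasDerivAt (fun x : ℝ => 2 * l * (1 - x) * Real.exp (l ^ 2 * (x - 1) / 2))
      (2 * l * Real.exp (l ^ 2 * (x - 1) / 2) * (l ^ 2 / 2 * (1 - x) - 1)) x := by
  have h1 : HasDerivAt (fun x : ℝ => 2 * l * (1 - x)) (-(2 * l)) x := by
    simpa using ((hasDerivAt_id x).const_sub 1).const_mul (2 * l)
  have h2 : HasDerivAt (fun x : ℝ => l ^ 2 * (x - 1) / 2) (l ^ 2 / 2) x := by
    simpa using (((hasDerivAt_id x).sub_const 1).const_mul (l ^ 2)).div_const 2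
  have h3 := h2.exp
  have := h1.mul h3
  refine this.congr_deriv ?_
  ring

lemma bFun_lip_left (l : ℝ) (hl : 0 < l) :
    ∀ s ∈ Set.Iic (1:ℝ), ∀ t ∈ Set.Iic (1:ℝ), |bFun l s - bFun l t| ≤ 2 * l * |s - t| := by
  set g : ℝ → ℝ := fun x => 2 * l * (1 - x) * Real.exp (l ^ 2 * (x - 1) / 2) with hg
  set g' : ℝ → ℝ := fun x => 2 * l * Real.exp (l ^ 2 * (x - 1) / 2) * (l ^ 2 / 2 * (1 - x) - 1)
    with hg'
  have hderiv : ∀ x ∈ Set.Iic (1:ℝ), HasDerivWithinAt g (g' x) (Set.Iic 1) x := fun x _ =>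
    (bFun_hasDerivAt l x).hasDerivWithinAt
  have hbound : ∀ x ∈ Set.Iic (1:ℝ), ‖g' x‖ ≤ 2 * l := by
    intro x hx
    simp only [Set.mem_Iic] at hx
    set u : ℝ := l ^ 2 / 2 * (1 - x) with hu
    have hu0 : 0 ≤ u := by
      have : (0:ℝ) ≤ 1 - x := by linarith
      positivity
    have hE : Real.exp (l ^ 2 * (x - 1) / 2) = Real.exp (-u) := by
      congr 1; rw [hu]; ring
    have key : Real.exp (-u) * (u + 1) ≤ 1 := by
      have h1 := Real.add_one_le_exp u
      have h2 : Real.exp (-u) * Real.exp u = 1 := by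
        rw [← Real.exp_add]; simp
      nlinarith [Real.exp_pos (-u), Real.exp_pos u]
    have habs : |u - 1| ≤ u + 1 := by
      rw [abs_le]; constructor <;> linarith
    rw [Real.norm_eq_abs, hg']
    simp only
    rw [hE]
    have : |2 * l * Real.exp (-u) * (u - 1)| = 2 * l * Real.exp (-u) * |u - 1| := by
      rw [abs_mul]
      congr 1
      rw [abs_of_nonneg]
      positivity
    rw [this]
    calc 2 * l * Real.exp (-u) * |u - 1| ≤ 2 * l * Real.exp (-u) * (u + 1) := by
          apply mul_le_mul_of_nonneg_left habs; positivity
      _ = 2 * l * (Real.exp (-u) * (u + 1)) := by ring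
      _ ≤ 2 * l * 1 := by apply mul_le_mul_of_nonneg_left key; positivity
      _ = 2 * l := by ring
  intro s hs t ht
  have heq : ∀ x ∈ Set.Iic (1:ℝ), bFun l x = g x := fun x hx => bFun_of_le l hx
  rw [heq s hs, heq t ht]
  have := (convex_Iic (1:ℝ)).norm_image_sub_le_of_norm_hasDerivWithin_le hderiv hbound ht hs
  simpa [Real.norm_eq_abs] using this

/-- For every ℓ > 0, b_ℓ is globally Lipschitz continuous on ℝ; it is bounded above by
4/(e·ℓ); and it is not bounded below. -/
theorem bFun_lipschitz_boundedAbove_not_boundedBelow (l : ℝ) (hl : 0 < l) :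
    (∃ C : ℝ, 0 ≤ C ∧ ∀ s t : ℝ, |bFun l s - bFun l t| ≤ C * |s - t|) ∧
    (∀ s : ℝ, bFun l s ≤ 4 / (Real.exp 1 * l)) ∧
    (∀ M : ℝ, 0 < M → ∃ s : ℝ, bFun l s < -M) := by
  refine ⟨⟨2 * l, by positivity, ?_⟩, ?_, ?_⟩
  · -- Lipschitz
    have lipR : ∀ s t : ℝ, 1 ≤ s → 1 ≤ t → |bFun l s - bFun l t| ≤ 2 * l * |s - t| := by
      intro s t hs ht
      rw [bFun_of_ge l hs, bFun_of_ge l ht]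
      have : 2 * l * (1 - s) - 2 * l * (1 - t) = 2 * l * (t - s) := by ring
      rw [this, abs_mul, abs_of_nonneg (by positivity : (0:ℝ) ≤ 2 * l), abs_sub_comm]
    have key : ∀ s t : ℝ, s ≤ t → |bFun l s - bFun l t| ≤ 2 * l * |s - t| := by
      intro s t hst
      rcases le_or_gt t 1 with ht | ht
      · exact bFun_lip_left l hl s (le_trans hst ht) t ht
      rcases le_or_gt 1 s with hs | hs
      · exact lipR s t hs ht.le
      · -- s < 1 < t
        calc |bFun l s - bFun l t|
            ≤ |bFun l s - bFun l 1| + |bFun l 1 - bFun l t| := abs_sub_le _ _ _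
          _ ≤ 2 * l * |s - 1| + 2 * l * |1 - t| := by
              gcongr
              · exact bFun_lip_left l hl s hs.le 1 (le_refl (1:ℝ))
              · exact lipR 1 t (le_refl (1:ℝ)) ht.le
          _ = 2 * l * (|s - 1| + |1 - t|) := by ring
          _ = 2 * l * |s - t| := by
              rw [abs_of_nonpos (by linarith), abs_of_nonpos (by linarith),
                abs_of_nonpos (by linarith)]
              ring
    intro s t
    rcases le_total s t with h | h
    · exact key s t h
    · rw [abs_sub_comm (bFun l s), abs_sub_comm s]
      exact key t s h
  · -- bounded above
    intro s
    rcases le_or_gt s 1 with hs | hs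
    · rw [bFun_of_le l hs]
      set u : ℝ := l ^ 2 * (1 - s) / 2 with hu
      have hu0 : 0 ≤ u := by
        have : (0:ℝ) ≤ 1 - s := by linarith
        positivity
      have hE : Real.exp (l ^ 2 * (s - 1) / 2) = Real.exp (-u) := by
        congr 1; rw [hu]; ring
      have h1s : 1 - s = 2 * u / l ^ 2 := by
        rw [hu]; field_simp
      rw [hE, h1s]
      have key : u * Real.exp (-u) ≤ 1 / Real.exp 1 := by
        have h1 : u ≤ Real.exp (u - 1) := by
          have := Real.add_one_le_exp (u - 1)
          linarith
        have h2 : Real.exp (u - 1) * Real.exp (-u) = 1 / Real.exp 1 := by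
          rw [← Real.exp_add]
          rw [show u - 1 + -u = -1 by ring, Real.exp_neg]
          ring
        calc u * Real.exp (-u) ≤ Real.exp (u - 1) * Real.exp (-u) := by
              apply mul_le_mul_of_nonneg_right h1 (Real.exp_pos _).le
          _ = 1 / Real.exp 1 := h2
      have hexp : (0:ℝ) < Real.exp 1 := Real.exp_pos 1
      have : 2 * l * (2 * u / l ^ 2) * Real.exp (-u) = (4 / l) * (u * Real.exp (-u)) := by
        field_simp; ring
      rw [this]
      calc (4 / l) * (u * Real.exp (-u)) ≤ (4 / l) * (1 / Real.exp 1) := by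
            apply mul_le_mul_of_nonneg_left key; positivity
        _ = 4 / (Real.exp 1 * l) := by field_simp
    · rw [bFun_of_ge l hs.le]
      have h1 : 2 * l * (1 - s) ≤ 0 := by nlinarith
      have h2 : (0:ℝ) ≤ 4 / (Real.exp 1 * l) := by positivity
      linarith
  · -- not bounded below
    intro M hM
    refine ⟨1 + (M + 1) / (2 * l), ?_⟩
    have hs : (1:ℝ) ≤ 1 + (M + 1) / (2 * l) := by
      have : (0:ℝ) ≤ (M + 1) / (2 * l) := by positivity
      linarith
    rw [bFun_of_ge l hs]
    have : 2 * l * (1 - (1 + (M + 1) / (2 * l))) = -(M + 1) := by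
      field_simp
      ring
    rw [this]
    linarith
end

section
/- Let ℓ > 0, S₀ ≥ 0, and let S : ℝ → ℝ satisfy S(0) = S₀ and be differentiable at every t ≥ 0 with S'(t) = b_ℓ(S(t)) for all t ≥ 0. Then for every t ≥ 0 one has min(S₀, 1) ≤ S(t) ≤ max(S₀, 1). -/
lemma hasDerivAt_maxsq (x : ℝ) : HasDerivAt (fun y : ℝ => max y 0 ^ 2) (2 * max x 0) x := by
  rcases lt_trichotomy x 0 with hx | hx | hx
  · have h : (fun y : ℝ => max y 0 ^ 2) =ᶠ[nhds x] fun _ => (0:ℝ) := by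
      filter_upwards [Iio_mem_nhds hx] with y hy
      rw [max_eq_right (le_of_lt (Set.mem_Iio.mp hy))]
      norm_num
    have h2 := (hasDerivAt_const x (0:ℝ)).congr_of_eventuallyEq h
    rw [max_eq_right hx.le]
    simpa using h2
  · subst hx
    rw [hasDerivAt_iff_isLittleO]
    have h1 : (fun y : ℝ => y ^ 2) =o[nhds 0] fun y : ℝ => y := by
      have := hasDerivAt_iff_isLittleO.mp (hasDerivAt_pow 2 (0:ℝ))
      simpa using this
    have h2 : (fun y : ℝ => max y 0 ^ 2) =O[nhds 0] fun y : ℝ => y ^ 2 := by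
      apply Asymptotics.IsBigO.of_bound 1
      filter_upwards with y
      have h0 : |max y 0| ≤ |y| := by
        rcases le_total y 0 with h | h
        · simp [max_eq_right h]
        · simp [max_eq_left h]
      rw [one_mul, Real.norm_eq_abs, Real.norm_eq_abs, abs_pow, abs_pow]
      exact pow_le_pow_left₀ (abs_nonneg _) h0 2
    have h3 := h2.trans_isLittleO h1
    simpa using h3
  · have h : (fun y : ℝ => max y 0 ^ 2) =ᶠ[nhds x] fun y => y ^ 2 := by
      filter_upwards [Ioi_mem_nhds hx] with y hy
      rw [max_eq_left (le_of_lt (Set.mem_Ioi.mp hy))]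
    have h2 := (hasDerivAt_pow 2 x).congr_of_eventuallyEq h
    rw [max_eq_left hx.le]
    refine h2.congr_deriv ?_
    push_cast
    norm_num

/-- Any solution of S' = b_ℓ(S) on [0,∞) with S(0) = S₀ ≥ 0 satisfies
min(S₀,1) ≤ S(t) ≤ max(S₀,1) for every t ≥ 0. -/
theorem ode_solution_bounds (l S₀ : ℝ) (hl : 0 < l) (hS₀ : 0 ≤ S₀)
    (S : ℝ → ℝ) (hS0 : S 0 = S₀)
    (hS : ∀ t : ℝ, 0 ≤ t → HasDerivAt S (bFun l (S t)) t) :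
    ∀ t : ℝ, 0 ≤ t → min S₀ 1 ≤ S t ∧ S t ≤ max S₀ 1 := by
  have hmpos : ∀ s : ℝ, 0 < min 1 (Real.exp (l ^ 2 * (s - 1) / 2)) :=
    fun s => lt_min one_pos (Real.exp_pos _)
  -- lower bound function
  have key : ∀ (u : ℝ → ℝ) (c : ℝ), (∀ s, 0 ≤ s → HasDerivAt u (c * bFun l (S s)) s) →
      (∀ s, 0 ≤ s → c * bFun l (S s) * max (u s) 0 ≤ 0) →
      ∀ t, 0 ≤ t → max (u t) 0 ^ 2 ≤ max (u 0) 0 ^ 2 := by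
    intro u c hu hsign t ht
    have hF : ∀ s, 0 ≤ s → HasDerivAt (fun r => max (u r) 0 ^ 2)
        (2 * max (u s) 0 * (c * bFun l (S s))) s := by
      intro s hs
      exact (hasDerivAt_maxsq (u s)).comp s (hu s hs)
    have hanti : AntitoneOn (fun r => max (u r) 0 ^ 2) (Set.Ici 0) := by
      apply antitoneOn_of_deriv_nonpos (convex_Ici 0)
      · exact fun x hx => ((hF x hx).continuousAt).continuousWithinAt
      · rw [interior_Ici]
        exact fun x hx => ((hF x (le_of_lt hx)).differentiableAt).differentiableWithinAt
      · rw [interior_Ici]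
        intro x hx
        rw [(hF x (le_of_lt hx)).deriv]
        have := hsign x (le_of_lt hx)
        nlinarith [this]
    exact hanti (Set.self_mem_Ici) ht ht
  intro t ht
  constructor
  · -- lower bound via u = 1 - S
    have hder : ∀ s, 0 ≤ s → HasDerivAt (fun r => 1 - S r) ((-1) * bFun l (S s)) s := by
      intro s hs
      simpa using (hS s hs).const_sub 1
    have hsign : ∀ s, 0 ≤ s → (-1) * bFun l (S s) * max (1 - S s) 0 ≤ 0 := by
      intro s hs
      rcases le_total (1 - S s) 0 with h | h
      · simp [max_eq_right h]
      · rw [max_eq_left h]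
        unfold bFun
        have := hmpos (S s)
        nlinarith [mul_nonneg (mul_nonneg (by linarith : (0:ℝ) ≤ 2 * l) this.le) (sq_nonneg (1 - S s))]
    have := key (fun r => 1 - S r) (-1) hder hsign t ht
    simp only [hS0] at this
    have h1 : max (1 - S t) 0 ≤ max (1 - S₀) 0 := by
      nlinarith [le_max_right (1 - S t) (0:ℝ), le_max_right (1 - S₀) (0:ℝ), this]
    have h2 : 1 - S t ≤ max (1 - S₀) 0 := le_trans (le_max_left _ _) h1
    rcases le_total S₀ 1 with h | h
    · rw [min_eq_left h]
      rw [max_eq_left (by linarith)] at h2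
      linarith
    · rw [min_eq_right h]
      rw [max_eq_right (by linarith)] at h2
      linarith
  · -- upper bound via u = S - 1
    have hder : ∀ s, 0 ≤ s → HasDerivAt (fun r => S r - 1) (1 * bFun l (S s)) s := by
      intro s hs
      simpa using (hS s hs).sub_const 1
    have hsign : ∀ s, 0 ≤ s → 1 * bFun l (S s) * max (S s - 1) 0 ≤ 0 := by
      intro s hs
      rcases le_total (S s - 1) 0 with h | h
      · simp [max_eq_right h]
      · rw [max_eq_left h]
        unfold bFun
        have := hmpos (S s)
        nlinarith [mul_nonneg (mul_nonneg (by linarith : (0:ℝ) ≤ 2 * l) this.le) (sq_nonneg (S s - 1))]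
    have := key (fun r => S r - 1) 1 hder hsign t ht
    simp only [hS0] at this
    have h1 : max (S t - 1) 0 ≤ max (S₀ - 1) 0 := by
      nlinarith [le_max_right (S t - 1) (0:ℝ), le_max_right (S₀ - 1) (0:ℝ), this]
    have h2 : S t - 1 ≤ max (S₀ - 1) 0 := le_trans (le_max_left _ _) h1
    rcases le_total S₀ 1 with h | h
    · rw [max_eq_right h]
      rw [max_eq_right (by linarith)] at h2
      linarith
    · rw [max_eq_left h]
      rw [max_eq_left (by linarith)] at h2
      linarith
end

section
/- Let ℓ > 0, S₀ ≥ 0, and let S : ℝ → ℝ satisfy S(0) = S₀ and be differentiable at every t ≥ 0 with S'(t) = b_ℓ(S(t)) for all t ≥ 0. Then S(t) → 1 as t → ∞. -/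
/-- Any solution of S' = b_ℓ(S) on [0,∞) with S(0) = S₀ ≥ 0 converges to 1 as t → ∞. -/
theorem ode_solution_tendsto_one (l S₀ : ℝ) (hl : 0 < l) (hS₀ : 0 ≤ S₀)
    (S : ℝ → ℝ) (hS0 : S 0 = S₀)
    (hS : ∀ t : ℝ, 0 ≤ t → HasDerivAt S (bFun l (S t)) t) :
    Filter.Tendsto S Filter.atTop (nhds 1) := by
  set M : ℝ := |S₀ - 1| with hM
  set m : ℝ := Real.exp (-(l ^ 2) * M / 2) with hm
  set K : ℝ := 4 * l * m with hK
  have hm0 : 0 < m := Real.exp_pos _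
  have hM0 : 0 ≤ M := abs_nonneg _
  have hm1 : m ≤ 1 := by
    rw [hm, Real.exp_le_one_iff]
    nlinarith [sq_nonneg l]
  have hK0 : 0 < K := by positivity
  set v : ℝ → ℝ := fun t => (S t - 1) ^ 2 with hv_def
  have hv : ∀ t : ℝ, 0 ≤ t → HasDerivAt v (2 * (S t - 1) * bFun l (S t)) t := by
    intro t ht
    have := ((hS t ht).sub_const 1).pow 2
    refine this.congr_deriv ?_
    push_cast
    ring
  have hmin_nonneg : ∀ s : ℝ, 0 ≤ min 1 (Real.exp (l ^ 2 * (s - 1) / 2)) :=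
    fun s => le_min zero_le_one (Real.exp_pos _).le
  -- v is nonincreasing on [0, ∞)
  have hvcont : ContinuousOn v (Set.Ici 0) :=
    fun t ht => (hv t ht).continuousAt.continuousWithinAt
  have hvanti : AntitoneOn v (Set.Ici 0) := by
    apply antitoneOn_of_deriv_nonpos (convex_Ici 0) hvcont
    · intro t ht
      rw [interior_Ici] at ht
      exact (hv t ht.le).differentiableAt.differentiableWithinAt
    · intro t ht
      rw [interior_Ici] at ht
      rw [(hv t ht.le).deriv]
      have h1 := hmin_nonneg (S t)
      unfold bFun
      nlinarith [mul_nonneg (mul_nonneg hl.le h1) (sq_nonneg (S t - 1))]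
  have habs : ∀ t : ℝ, 0 ≤ t → |S t - 1| ≤ M := by
    intro t ht
    have h1 : v t ≤ v 0 := hvanti (Set.mem_Ici.mpr le_rfl) ht ht
    have h2 : v 0 = (S₀ - 1) ^ 2 := by rw [hv_def]; simp [hS0]
    have h3 : (S t - 1) ^ 2 ≤ (S₀ - 1) ^ 2 := by rw [← h2]; exact h1
    have := Real.sqrt_le_sqrt h3
    rwa [Real.sqrt_sq_eq_abs, Real.sqrt_sq_eq_abs] at this
  -- the min term is bounded below by m
  have hpm : ∀ t : ℝ, 0 ≤ t → m ≤ min 1 (Real.exp (l ^ 2 * (S t - 1) / 2)) := by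
    intro t ht
    refine le_min hm1 ?_
    rw [hm]
    apply Real.exp_le_exp.mpr
    have h1 : -M ≤ S t - 1 := (abs_le.mp (habs t ht)).1
    nlinarith [sq_nonneg l]
  -- g = v * exp(K t) is nonincreasing
  set g : ℝ → ℝ := fun t => v t * Real.exp (K * t) with hg_def
  have hgderiv : ∀ t : ℝ, 0 ≤ t → HasDerivAt g
      ((2 * (S t - 1) * bFun l (S t) + K * v t) * Real.exp (K * t)) t := by
    intro t ht
    have h1 : HasDerivAt (fun t : ℝ => K * t) K t := by
      simpa using (hasDerivAt_id t).const_mul K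
    have := (hv t ht).mul h1.exp
    refine this.congr_deriv ?_
    ring
  have hgcont : ContinuousOn g (Set.Ici 0) :=
    fun t ht => (hgderiv t ht).continuousAt.continuousWithinAt
  have hganti : AntitoneOn g (Set.Ici 0) := by
    apply antitoneOn_of_deriv_nonpos (convex_Ici 0) hgcont
    · intro t ht
      rw [interior_Ici] at ht
      exact (hgderiv t ht.le).differentiableAt.differentiableWithinAt
    · intro t ht
      rw [interior_Ici] at ht
      rw [(hgderiv t ht.le).deriv]
      have h1 := hpm t ht.le
      have h2 : (0:ℝ) < Real.exp (K * t) := Real.exp_pos _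
      have hvt : v t = (S t - 1) ^ 2 := rfl
      have h3 : 2 * (S t - 1) * bFun l (S t) + K * v t ≤ 0 := by
        unfold bFun
        rw [hvt, hK]
        nlinarith [mul_nonneg (mul_nonneg hl.le (sub_nonneg.mpr h1)) (sq_nonneg (S t - 1))]
      nlinarith
  -- exponential decay of v
  have hvdecay : ∀ t : ℝ, 0 ≤ t → v t ≤ (S₀ - 1) ^ 2 * Real.exp (-(K * t)) := by
    intro t ht
    have h1 : g t ≤ g 0 := hganti (Set.mem_Ici.mpr le_rfl) ht ht
    have h2 : g 0 = (S₀ - 1) ^ 2 := by rw [hg_def, hv_def]; simp [hS0]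
    rw [h2] at h1
    rw [Real.exp_neg, ← div_eq_mul_inv, le_div_iff₀ (Real.exp_pos _)]
    exact h1
  -- v → 0
  have hvlim : Filter.Tendsto v Filter.atTop (nhds 0) := by
    have hub : Filter.Tendsto (fun t => (S₀ - 1) ^ 2 * Real.exp (-(K * t)))
        Filter.atTop (nhds 0) := by
      have h1 : Filter.Tendsto (fun t : ℝ => K * t) Filter.atTop Filter.atTop :=
        Filter.Tendsto.const_mul_atTop hK0 Filter.tendsto_id
      have h2 : Filter.Tendsto (fun t : ℝ => -(K * t)) Filter.atTop Filter.atBot :=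
        Filter.tendsto_neg_atBot_iff.mpr h1
      have h3 := Real.tendsto_exp_atBot.comp h2
      simpa using h3.const_mul ((S₀ - 1) ^ 2)
    apply squeeze_zero' ?_ ?_ hub
    · filter_upwards [Filter.eventually_ge_atTop (0:ℝ)] with t ht
      exact sq_nonneg _
    · filter_upwards [Filter.eventually_ge_atTop (0:ℝ)] with t ht
      exact hvdecay t ht
  have habslim : Filter.Tendsto (fun t => |S t - 1|) Filter.atTop (nhds 0) := by
    have h := (Real.continuous_sqrt.tendsto 0).comp hvlim
    rw [Real.sqrt_zero] at h
    exact h.congr fun t => Real.sqrt_sq_eq_abs _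
  rw [tendsto_iff_dist_tendsto_zero]
  simpa [Real.dist_eq] using habslim
end

section
/- Let ℓ > 0, S₀ ≥ 0, and let S : ℝ → ℝ satisfy S(0) = S₀ and be differentiable at every t ≥ 0 with S'(t) = b_ℓ(S(t)) for all t ≥ 0. Then S(t) > 0 for every t > 0. -/
lemma bFun_pos (l : ℝ) (hl : 0 < l) {s : ℝ} (hs : s < 1) : 0 < bFun l s := by
  have h1 : 0 < 1 - s := by linarith
  have h2 : 0 < 2 * l * (1 - s) := by positivity
  exact mul_pos h2 (lt_min one_pos (Real.exp_pos _))

/-- Any solution of S' = b_ℓ(S) on [0,∞) with S(0) = S₀ ≥ 0 is strictly positive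
for every t > 0. -/
theorem ode_solution_pos (l S₀ : ℝ) (hl : 0 < l) (hS₀ : 0 ≤ S₀)
    (S : ℝ → ℝ) (hS0 : S 0 = S₀)
    (hS : ∀ t : ℝ, 0 ≤ t → HasDerivAt S (bFun l (S t)) t) :
    ∀ t : ℝ, 0 < t → 0 < S t := by
  intro t ht
  by_contra hcon
  push_neg at hcon
  have key : ∀ u : ℝ, 0 ≤ u → u < t → (∀ x, u < x → x ≤ t → S x < 1) → 0 ≤ S u → False := by
    intro u hu0 hut hlt hSu
    have hmono : StrictMonoOn S (Set.Icc u t) := by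
      apply strictMonoOn_of_deriv_pos (convex_Icc u t)
      · exact fun x hx => ((hS x (le_trans hu0 hx.1)).continuousAt).continuousWithinAt
      · intro x hx
        rw [interior_Icc] at hx
        have hd := hS x (le_trans hu0 hx.1.le)
        rw [hd.deriv]
        exact bFun_pos l hl (hlt x hx.1 hx.2.le)
    have := hmono (Set.left_mem_Icc.2 hut.le) (Set.right_mem_Icc.2 hut.le) hut
    linarith
  set A := {x ∈ Set.Icc (0:ℝ) t | 1 ≤ S x} with hA
  by_cases hne : A.Nonempty
  · have hcont : ContinuousOn S (Set.Icc 0 t) := fun x hx =>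
      ((hS x hx.1).continuousAt).continuousWithinAt
    have hclosed : IsClosed A := by
      have := hcont.preimage_isClosed_of_isClosed isClosed_Icc (isClosed_Ici (a := (1:ℝ)))
      simpa [hA, Set.preimage, Set.sep_setOf, Set.inter_def] using this
    have hsub : A ⊆ Set.Icc 0 t := fun x hx => hx.1
    have hcomp : IsCompact A := isCompact_Icc.of_isClosed_subset hclosed hsub
    have humem : sSup A ∈ A := hcomp.sSup_mem hne
    set u := sSup A with hu
    have hSu : 1 ≤ S u := humem.2
    have hu0 : 0 ≤ u := humem.1.1
    have hut : u < t := by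
      rcases lt_or_eq_of_le humem.1.2 with h | h
      · exact h
      · exfalso; rw [h] at hSu; linarith
    refine key u hu0 hut ?_ (by linarith)
    intro x hx hxt
    by_contra hge
    push_neg at hge
    have hxA : x ∈ A := ⟨⟨le_trans hu0 hx.le, hxt⟩, hge⟩
    have : x ≤ u := le_csSup hcomp.bddAbove hxA
    linarith
  · refine key 0 le_rfl ht ?_ (by rw [hS0]; exact hS₀)
    intro x hx hxt
    by_contra hge
    push_neg at hge
    exact hne ⟨x, ⟨hx.le, hxt⟩, hge⟩
end

section
/- Fix a real number q ≥ 1/2, reals ℓ > 0, s ≥ 0, K ≥ 0 and τ ≥ 0. There exists a constant C > 0, depending only on q, ℓ, s, K and τ, with the following property. For every natural number N ≥ 1, every λ : {1,…,N} → [0,∞) with ∑_{j=1}^N j^{2s} λ_j² ≤ τ, and every x, G ∈ ℝ^N with ∑_{j=1}^N j^{2s} G_j² ≤ K², setting δ := ℓ·N^{−1/2} and, for ξ ∈ ℝ^N, y(ξ)_j := x_j − δ(x_j + G_j) + √(2δ)·λ_j·ξ_j, one has ∫ ( ∑_{j=1}^N j^{2s} (y(ξ)_j − x_j)² )^q dμ_N(ξ)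 ≤ C · N^{−q/2} · ( 1 + ( ∑_{j=1}^N j^{2s} x_j² )^q ), where μ_N is the N-fold product of the standard Gaussian measure N(0,1) on ℝ. -/
open MeasureTheory ProbabilityTheory Real

lemma aux_rpow_add_le {a b : ℝ} (q : ℝ) (ha : 0 ≤ a) (hb : 0 ≤ b) (hq : 0 ≤ q) :
    (a + b) ^ q ≤ 2 ^ q * (a ^ q + b ^ q) := by
  rcases le_total a b with h | h
  · calc (a + b) ^ q ≤ (2 * b) ^ q := by
          apply Real.rpow_le_rpow (by linarith) (by linarith) hq
      _ = 2 ^ q * b ^ q := Real.mul_rpow (by norm_num) hb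
      _ ≤ 2 ^ q * (a ^ q + b ^ q) := by
          have := Real.rpow_nonneg ha q
          have h2 : (0:ℝ) ≤ 2 ^ q := Real.rpow_nonneg (by norm_num) q
          nlinarith
  · calc (a + b) ^ q ≤ (2 * a) ^ q := by
          apply Real.rpow_le_rpow (by linarith) (by linarith) hq
      _ = 2 ^ q * a ^ q := Real.mul_rpow (by norm_num) ha
      _ ≤ 2 ^ q * (a ^ q + b ^ q) := by
          have := Real.rpow_nonneg hb q
          have h2 : (0:ℝ) ≤ 2 ^ q := Real.rpow_nonneg (by norm_num) q
          nlinarith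

lemma aux_rpow_le_one_add_pow {z q : ℝ} (n : ℕ) (hz : 0 ≤ z) (hq : 0 ≤ q) (hqn : q ≤ n) :
    z ^ q ≤ 1 + z ^ n := by
  rcases le_total z 1 with h | h
  · have : z ^ q ≤ 1 := Real.rpow_le_one hz h hq
    have : (0:ℝ) ≤ z ^ n := pow_nonneg hz n
    linarith
  · have h1 : z ^ q ≤ z ^ (n : ℝ) := Real.rpow_le_rpow_of_exponent_le h hqn
    rw [Real.rpow_natCast] at h1
    linarith

lemma aux_jensen_pow {N : ℕ} (m : ℕ) (hm : 1 ≤ m) (w z : Fin N → ℝ)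
    (hw : ∀ j, 0 ≤ w j) (hz : ∀ j, 0 ≤ z j) :
    (∑ j, w j * z j) ^ m ≤ (∑ j, w j) ^ (m - 1) * ∑ j, w j * z j ^ m := by
  set W := ∑ j, w j with hW
  have hW0 : 0 ≤ W := Finset.sum_nonneg fun j _ => hw j
  rcases eq_or_lt_of_le hW0 with h0 | hpos
  · have hall : ∀ j ∈ Finset.univ, w j = 0 := by
      rw [← Finset.sum_eq_zero_iff_of_nonneg (fun j _ => hw j)]
      exact h0.symm
    have h1 : (∑ j, w j * z j) = 0 :=
      Finset.sum_eq_zero fun j hj => by rw [hall j hj, zero_mul]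
    have h2 : (∑ j, w j * z j ^ m) = 0 :=
      Finset.sum_eq_zero fun j hj => by rw [hall j hj, zero_mul]
    rw [h1, h2, zero_pow (by omega), mul_zero]
  · have hconv : ConvexOn ℝ (Set.Ici (0:ℝ)) (fun t : ℝ => t ^ m) := convexOn_pow m
    have hsum1 : ∑ j, w j / W = 1 := by
      rw [← Finset.sum_div, ← hW, div_self (ne_of_gt hpos)]
    have hj := hconv.map_sum_le (t := Finset.univ) (w := fun j => w j / W) (p := z)
      (fun j _ => div_nonneg (hw j) hW0) hsum1 (fun j _ => hz j)
    simp only [smul_eq_mul] at hj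
    have key : (∑ j, w j * z j) = W * ∑ j, (w j / W) * z j := by
      rw [Finset.mul_sum]
      refine Finset.sum_congr rfl fun j _ => ?_
      field_simp
    have key2 : (∑ j, w j * z j ^ m) = W * ∑ j, (w j / W) * z j ^ m := by
      rw [Finset.mul_sum]
      refine Finset.sum_congr rfl fun j _ => ?_
      field_simp
    calc (∑ j, w j * z j) ^ m = W ^ m * (∑ j, (w j / W) * z j) ^ m := by
          rw [key, mul_pow]
      _ ≤ W ^ m * ∑ j, (w j / W) * z j ^ m :=
          mul_le_mul_of_nonneg_left hj (pow_nonneg hW0 m)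
      _ = W ^ (m - 1) * (W * ∑ j, (w j / W) * z j ^ m) := by
          rw [← mul_assoc, ← pow_succ]
          congr 2
          omega
      _ = W ^ (m - 1) * ∑ j, w j * z j ^ m := by rw [← key2]

lemma aux_pow_mul_exp_le (n : ℕ) (x : ℝ) :
    x ^ (2 * n) * Real.exp (-x ^ 2 / 2) ≤ (4 ^ n * n.factorial) * Real.exp (-(1/4) * x ^ 2) := by
  have h1 : (x ^ 2 / 4) ^ n ≤ n.factorial * Real.exp (x ^ 2 / 4) := by
    have hx : (0:ℝ) ≤ x ^ 2 / 4 := by positivity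
    have hsum := Real.sum_le_exp_of_nonneg hx (n + 1)
    have hterm : (x ^ 2 / 4) ^ n / n.factorial ≤ ∑ i ∈ Finset.range (n+1), (x ^ 2 / 4) ^ i / i.factorial := by
      exact Finset.single_le_sum (f := fun i => (x ^ 2 / 4) ^ i / (i.factorial : ℝ))
        (fun i _ => by positivity) (Finset.self_mem_range_succ n)
    have hf : (0:ℝ) < n.factorial := by positivity
    rw [div_le_iff₀ hf] at hterm
    calc (x ^ 2 / 4) ^ n ≤ (∑ i ∈ Finset.range (n+1), (x ^ 2 / 4) ^ i / i.factorial) * n.factorial := hterm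
      _ ≤ Real.exp (x ^ 2 / 4) * n.factorial := by
          apply mul_le_mul_of_nonneg_right hsum hf.le
      _ = n.factorial * Real.exp (x ^ 2 / 4) := by ring
  have h2 : x ^ (2 * n) = 4 ^ n * (x ^ 2 / 4) ^ n := by
    rw [pow_mul, div_pow]
    rw [mul_div_cancel₀ _ (by positivity : (4:ℝ)^n ≠ 0)]
  have h3 : Real.exp (x ^ 2 / 4) * Real.exp (-x ^ 2 / 2) = Real.exp (-(1/4) * x ^ 2) := by
    rw [← Real.exp_add]; ring_nf
  have hexp : (0:ℝ) < Real.exp (-x ^ 2 / 2) := Real.exp_pos _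
  calc x ^ (2 * n) * Real.exp (-x ^ 2 / 2)
      = 4 ^ n * ((x ^ 2 / 4) ^ n * Real.exp (-x ^ 2 / 2)) := by rw [h2]; ring
    _ ≤ 4 ^ n * ((n.factorial * Real.exp (x ^ 2 / 4)) * Real.exp (-x ^ 2 / 2)) := by
        apply mul_le_mul_of_nonneg_left _ (by positivity)
        exact mul_le_mul_of_nonneg_right h1 hexp.le
    _ = (4 ^ n * n.factorial) * Real.exp (-(1/4) * x ^ 2) := by rw [mul_assoc, h3]; ring

lemma aux_gaussian_moment_integrable (n : ℕ) :
    Integrable (fun x : ℝ => x ^ (2 * n)) (gaussianReal 0 1) := by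
  rw [gaussianReal_of_var_ne_zero 0 one_ne_zero]
  rw [integrable_withDensity_iff (measurable_gaussianPDF 0 1)
    (Filter.Eventually.of_forall fun x => ENNReal.ofReal_lt_top)]
  have heq : ∀ x : ℝ, (gaussianPDF 0 1 x).toReal = gaussianPDFReal 0 1 x := fun x =>
    ENNReal.toReal_ofReal (gaussianPDFReal_nonneg 0 1 x)
  simp_rw [heq]
  have hint : Integrable (fun x : ℝ => ((Real.sqrt (2 * Real.pi))⁻¹ * (4 ^ n * n.factorial)) * Real.exp (-(1/4) * x ^ 2)) volume :=
    (integrable_exp_neg_mul_sq (by norm_num : (0:ℝ) < 1/4)).const_mul _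
  apply hint.mono'
  · apply Continuous.aestronglyMeasurable
    have : Continuous (gaussianPDFReal 0 1) := by
      unfold gaussianPDFReal
      continuity
    exact (continuous_pow (2*n)).mul this
  · refine Filter.Eventually.of_forall fun x => ?_
    have hge : (0:ℝ) ≤ x ^ (2*n) := by rw [pow_mul]; positivity
    have hpdf : (0:ℝ) ≤ (Real.sqrt (2 * Real.pi * (1:NNReal)))⁻¹ * Real.exp (-(x - 0)^2 / (2 * (1:NNReal))) := by positivity
    rw [Real.norm_eq_abs, abs_of_nonneg (mul_nonneg hge (gaussianPDFReal_nonneg 0 1 x))]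
    unfold gaussianPDFReal
    have hb := aux_pow_mul_exp_le n x
    have hc : (0:ℝ) ≤ (Real.sqrt (2 * Real.pi))⁻¹ := by positivity
    calc x ^ (2*n) * ((Real.sqrt (2 * Real.pi * (1:NNReal)))⁻¹ * Real.exp (-(x - 0)^2 / (2 * (1:NNReal))))
        = (Real.sqrt (2 * Real.pi))⁻¹ * (x ^ (2*n) * Real.exp (-x^2 / 2)) := by
          push_cast
          ring_nf
      _ ≤ (Real.sqrt (2 * Real.pi))⁻¹ * ((4 ^ n * n.factorial) * Real.exp (-(1/4) * x ^ 2)) :=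
          mul_le_mul_of_nonneg_left hb hc
      _ = ((Real.sqrt (2 * Real.pi))⁻¹ * (4 ^ n * n.factorial)) * Real.exp (-(1/4) * x ^ 2) := by ring

lemma aux_map_eval_pi {N : ℕ} (j : Fin N) :
    Measure.map (fun ξ : Fin N → ℝ => ξ j) (Measure.pi fun _ : Fin N => gaussianReal 0 1) = gaussianReal 0 1 := by
  ext s hs
  rw [Measure.map_apply (measurable_pi_apply j) hs]
  have hpre : (fun ξ : Fin N → ℝ => ξ j) ⁻¹' s
      = Set.pi Set.univ (Function.update (fun _ : Fin N => (Set.univ : Set ℝ)) j s) := by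
    rw [← Set.eval_preimage]
  rw [hpre, Measure.pi_pi]
  rw [Finset.prod_eq_single j
    (fun i _ hij => by rw [Function.update_of_ne hij]; simp)
    (by simp)]
  rw [Function.update_self]


lemma aux_factor1 (a b t : ℝ) (ha : 0 ≤ a) (hb : 0 ≤ b) (ht : 0 ≤ t) :
    a + b ≤ (1 + b + t) * (1 + a) := by nlinarith

lemma aux_factor2 (a b t : ℝ) (ha : 0 ≤ a) (hb : 0 ≤ b) (ht : 0 ≤ t) :
    1 + t ≤ (1 + b + t) * (1 + a) := by nlinarith

set_option maxHeartbeats 1000000 in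
/-- One-step jump-size estimate in the Sobolev-like norm for the MALA proposal
y = x − δ(x + G) + √(2δ) λ ξ with δ = ℓ/√N:
E‖y − x‖_s^{2q} ≤ C N^{−q/2} (1 + ‖x‖_s^{2q}), uniformly over N, λ, x, G with
∑ j^{2s} λ_j² ≤ τ and ‖G‖_s ≤ K. -/
theorem mala_jump_size_sobolev (q l s K τ : ℝ) (hq : 1 / 2 ≤ q) (hl : 0 < l)
    (hs : 0 ≤ s) (hK : 0 ≤ K) (hτ : 0 ≤ τ) :
    ∃ C : ℝ, 0 < C ∧
      ∀ (N : ℕ), 1 ≤ N →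
      ∀ lam x G : Fin N → ℝ,
        (∀ j, 0 ≤ lam j) →
        (∑ j : Fin N, ((j.1 : ℝ) + 1) ^ (2 * s) * lam j ^ 2) ≤ τ →
        (∑ j : Fin N, ((j.1 : ℝ) + 1) ^ (2 * s) * G j ^ 2) ≤ K ^ 2 →
        (∫ ξ : Fin N → ℝ,
            (∑ j : Fin N, ((j.1 : ℝ) + 1) ^ (2 * s) *
              ((x j - (l / Real.sqrt N) * (x j + G j)
                  + Real.sqrt (2 * (l / Real.sqrt N)) * lam j * ξ j) - x j) ^ 2) ^ q
            ∂(Measure.pi fun _ : Fin N => gaussianReal 0 1)) ≤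
          C * (N : ℝ) ^ (-(q / 2)) *
            (1 + (∑ j : Fin N, ((j.1 : ℝ) + 1) ^ (2 * s) * x j ^ 2) ^ q) := by
  have hq0 : (0:ℝ) < q := lt_of_lt_of_le (by norm_num) hq
  set n : ℕ := Nat.ceil q with hn
  have hn1 : 1 ≤ n := Nat.one_le_ceil_iff.mpr hq0
  set M : ℝ := ∫ t, t ^ (2 * n) ∂(gaussianReal 0 1) with hMdef
  have hM0 : 0 ≤ M := integral_nonneg fun t => by rw [pow_mul]; positivity
  refine ⟨16 ^ q * (l ^ (2*q) + l ^ q) * (1 + K ^ (2*q) + τ ^ n * M), by positivity, ?_⟩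
  intro N hN lam x G hlam hτsum hGsum
  set ν : Measure (Fin N → ℝ) := Measure.pi fun _ : Fin N => gaussianReal 0 1 with hν
  set δ : ℝ := l / Real.sqrt N with hδ
  have hNpos : (0:ℝ) < N := by exact_mod_cast hN
  have hsqrtN : 1 ≤ Real.sqrt N := by
    rw [show (1:ℝ) = Real.sqrt 1 from (Real.sqrt_one).symm]
    exact Real.sqrt_le_sqrt (by exact_mod_cast hN)
  have hδ0 : 0 < δ := div_pos hl (lt_of_lt_of_le one_pos hsqrtN)
  -- abbreviations
  set c : Fin N → ℝ := fun j => ((j.1 : ℝ) + 1) ^ (2 * s) with hc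
  have hc0 : ∀ j, 0 ≤ c j := fun j => Real.rpow_nonneg (by positivity) _
  set w : Fin N → ℝ := fun j => c j * lam j ^ 2 with hw
  have hw0 : ∀ j, 0 ≤ w j := fun j => mul_nonneg (hc0 j) (sq_nonneg _)
  set W : ℝ := ∑ j, w j with hW
  have hW0 : 0 ≤ W := Finset.sum_nonneg fun j _ => hw0 j
  have hWτ : W ≤ τ := hτsum
  set X : ℝ := ∑ j, c j * x j ^ 2 with hX
  have hX0 : 0 ≤ X := Finset.sum_nonneg fun j _ => mul_nonneg (hc0 j) (sq_nonneg _)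
  set A : ℝ := 4 * δ^2 * (X + K^2) with hA
  have hA0 : 0 ≤ A := by positivity
  set B : ℝ := 4 * δ with hB
  have hB0 : 0 ≤ B := by positivity
  set S : (Fin N → ℝ) → ℝ := fun ξ => ∑ j, c j *
    ((x j - δ * (x j + G j) + Real.sqrt (2*δ) * lam j * ξ j) - x j) ^ 2 with hS
  set Z : (Fin N → ℝ) → ℝ := fun ξ => ∑ j, w j * ξ j ^ 2 with hZ
  have hZ0 : ∀ ξ, 0 ≤ Z ξ := fun ξ => Finset.sum_nonneg fun j _ =>
    mul_nonneg (hw0 j) (sq_nonneg _)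
  have hS0 : ∀ ξ, 0 ≤ S ξ := fun ξ => Finset.sum_nonneg fun j _ =>
    mul_nonneg (hc0 j) (sq_nonneg _)
  -- step 1 : S ξ ≤ A + B * Z ξ
  have hstep1 : ∀ ξ, S ξ ≤ A + B * Z ξ := by
    intro ξ
    have hsq : (Real.sqrt (2*δ))^2 = 2*δ := Real.sq_sqrt (by positivity)
    have hterm : ∀ j : Fin N, c j *
        ((x j - δ * (x j + G j) + Real.sqrt (2*δ) * lam j * ξ j) - x j) ^ 2
        ≤ 4*δ*(w j * ξ j ^ 2) + 2*δ^2*(c j * (x j + G j)^2) := by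
      intro j
      have h1 : ((x j - δ * (x j + G j) + Real.sqrt (2*δ) * lam j * ξ j) - x j) ^ 2
          ≤ 2*((Real.sqrt (2*δ) * lam j * ξ j)^2) + 2*((δ * (x j + G j))^2) := by
        nlinarith [sq_nonneg (Real.sqrt (2*δ) * lam j * ξ j + δ * (x j + G j))]
      have h2 : (Real.sqrt (2*δ) * lam j * ξ j)^2 = 2*δ*(lam j ^2 * ξ j ^2) := by
        rw [mul_pow, mul_pow, hsq]; ring
      calc c j * ((x j - δ * (x j + G j) + Real.sqrt (2*δ) * lam j * ξ j) - x j) ^ 2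
          ≤ c j * (2*((Real.sqrt (2*δ) * lam j * ξ j)^2) + 2*((δ * (x j + G j))^2)) :=
            mul_le_mul_of_nonneg_left h1 (hc0 j)
        _ = 4*δ*(w j * ξ j ^ 2) + 2*δ^2*(c j * (x j + G j)^2) := by
            rw [h2, hw]; ring
    have hGx : ∑ j, c j * (x j + G j)^2 ≤ 2*X + 2*K^2 := by
      have h1 : ∀ j : Fin N, c j * (x j + G j)^2 ≤ 2*(c j * x j^2) + 2*(c j * G j^2) := by
        intro j
        have := hc0 j
        nlinarith [sq_nonneg (x j - G j)]
      calc ∑ j, c j * (x j + G j)^2 ≤ ∑ j, (2*(c j * x j^2) + 2*(c j * G j^2)) :=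
            Finset.sum_le_sum fun j _ => h1 j
        _ = 2*X + 2*(∑ j, c j * G j^2) := by
            rw [Finset.sum_add_distrib, ← Finset.mul_sum, ← Finset.mul_sum, hX]
        _ ≤ 2*X + 2*K^2 := by linarith [hGsum]
    calc S ξ ≤ ∑ j, (4*δ*(w j * ξ j ^ 2) + 2*δ^2*(c j * (x j + G j)^2)) :=
          Finset.sum_le_sum fun j _ => hterm j
      _ = 4*δ*(Z ξ) + 2*δ^2*(∑ j, c j * (x j + G j)^2) := by
          rw [Finset.sum_add_distrib, ← Finset.mul_sum, ← Finset.mul_sum, hZ]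
      _ ≤ 4*δ*(Z ξ) + 2*δ^2*(2*X + 2*K^2) :=
          add_le_add (le_refl _) (mul_le_mul_of_nonneg_left hGx (by positivity))
      _ = A + B * Z ξ := by rw [hA, hB]; ring
  -- step 2 : pointwise rpow bound
  set c1 : ℝ := 2^q * A^q + 2^q * B^q with hc1
  set c2 : ℝ := 2^q * B^q * W^(n-1) with hc2
  have h2q0 : (0:ℝ) ≤ 2^q := Real.rpow_nonneg (by norm_num) q
  have hAq0 : (0:ℝ) ≤ A^q := Real.rpow_nonneg hA0 q
  have hBq0 : (0:ℝ) ≤ B^q := Real.rpow_nonneg hB0 q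
  set g : (Fin N → ℝ) → ℝ := fun ξ => c1 + c2 * ∑ j, w j * ξ j ^ (2*n) with hg
  have hstep2 : ∀ ξ, S ξ ^ q ≤ g ξ := by
    intro ξ
    have hZn : Z ξ ^ q ≤ 1 + W^(n-1) * ∑ j, w j * ξ j ^ (2*n) := by
      have h1 : Z ξ ^ q ≤ 1 + Z ξ ^ n :=
        aux_rpow_le_one_add_pow n (hZ0 ξ) hq0.le (Nat.le_ceil q)
      have h2 : Z ξ ^ n ≤ W^(n-1) * ∑ j, w j * (ξ j ^ 2) ^ n := by
        rw [hZ, hW]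
        exact aux_jensen_pow n hn1 w (fun j => ξ j ^ 2) hw0 (fun j => sq_nonneg _)
      have h3 : (∑ j, w j * (ξ j ^ 2) ^ n) = ∑ j, w j * ξ j ^ (2*n) := by
        refine Finset.sum_congr rfl fun j _ => ?_
        rw [← pow_mul]
      rw [h3] at h2
      linarith
    have hmain : S ξ ^ q ≤ 2^q * (A^q + B^q * Z ξ ^ q) := by
      calc S ξ ^ q ≤ (A + B * Z ξ) ^ q :=
            Real.rpow_le_rpow (hS0 ξ) (hstep1 ξ) hq0.le
        _ ≤ 2^q * (A^q + (B * Z ξ)^q) :=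
            aux_rpow_add_le q hA0 (mul_nonneg hB0 (hZ0 ξ)) hq0.le
        _ = 2^q * (A^q + B^q * Z ξ ^ q) := by rw [Real.mul_rpow hB0 (hZ0 ξ)]
    have hsum0 : (0:ℝ) ≤ ∑ j, w j * ξ j ^ (2*n) := Finset.sum_nonneg fun j _ =>
      mul_nonneg (hw0 j) (by rw [pow_mul]; positivity)
    have h2B : (0:ℝ) ≤ 2^q * B^q := mul_nonneg h2q0 hBq0
    calc S ξ ^ q ≤ 2^q * (A^q + B^q * Z ξ ^ q) := hmain
      _ = 2^q * A^q + (2^q * B^q) * Z ξ ^ q := by ring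
      _ ≤ 2^q * A^q + (2^q * B^q) * (1 + W^(n-1) * ∑ j, w j * ξ j ^ (2*n)) :=
          add_le_add (le_refl _) (mul_le_mul_of_nonneg_left hZn h2B)
      _ = g ξ := by rw [hg, hc1, hc2]; ring
  -- integrability of g
  have hint_j : ∀ j : Fin N, Integrable (fun ξ : Fin N → ℝ => ξ j ^ (2*n)) ν := by
    intro j
    have hmeas : AEStronglyMeasurable (fun t : ℝ => t ^ (2*n))
        (Measure.map (fun ξ : Fin N → ℝ => ξ j) ν) :=
      (measurable_id.pow_const (2*n)).aestronglyMeasurable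
    have h1 : Integrable ((fun t : ℝ => t ^ (2*n)) ∘ (fun ξ : Fin N → ℝ => ξ j)) ν := by
      rw [← integrable_map_measure hmeas (measurable_pi_apply j).aemeasurable]
      rw [hν, aux_map_eval_pi j]
      exact aux_gaussian_moment_integrable n
    exact h1
  have hval_j : ∀ j : Fin N, ∫ ξ, ξ j ^ (2*n) ∂ν = M := by
    intro j
    have hmeas : AEStronglyMeasurable (fun t : ℝ => t ^ (2*n))
        (Measure.map (fun ξ : Fin N → ℝ => ξ j) ν) :=
      (measurable_id.pow_const (2*n)).aestronglyMeasurable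
    have h1 := integral_map (μ := ν) (measurable_pi_apply j).aemeasurable hmeas
    rw [hν, aux_map_eval_pi j] at h1
    rw [← h1, hMdef]
  have hsumint : Integrable (fun ξ : Fin N → ℝ => ∑ j, w j * ξ j ^ (2*n)) ν :=
    integrable_finset_sum _ fun j _ => (hint_j j).const_mul (w j)
  have hgint : Integrable g ν := by
    rw [hg]
    exact (integrable_const c1).add (hsumint.const_mul c2)
  -- integral of g
  have hgval : ∫ ξ, g ξ ∂ν = c1 + c2 * (W * M) := by
    rw [hg]
    rw [integral_add (integrable_const c1) (hsumint.const_mul c2)]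
    rw [integral_const]
    rw [integral_const_mul]
    rw [integral_finset_sum _ fun j _ => (hint_j j).const_mul (w j)]
    have : ∀ j : Fin N, ∫ ξ, w j * ξ j ^ (2*n) ∂ν = w j * M := by
      intro j
      rw [integral_const_mul, hval_j j]
    simp_rw [this]
    rw [← Finset.sum_mul, ← hW]
    simp [measure_univ]
  -- bound the integral
  have hmono : ∫ ξ, S ξ ^ q ∂ν ≤ c1 + c2 * (W * M) := by
    rw [← hgval]
    exact integral_mono_of_nonneg
      (Filter.Eventually.of_forall fun ξ => Real.rpow_nonneg (hS0 ξ) q)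
      hgint (Filter.Eventually.of_forall hstep2)
  have hc2WM : c2 * (W * M) ≤ 2^q * B^q * (τ^n * M) := by
    rw [hc2]
    have h1 : W^(n-1) * W = W^n := by
      rw [← pow_succ]
      congr 1
      omega
    have h2 : W^n ≤ τ^n := pow_le_pow_left₀ hW0 hWτ n
    calc 2^q * B^q * W^(n-1) * (W * M) = 2^q * B^q * (W^(n-1) * W * M) := by ring
      _ = 2^q * B^q * (W^n * M) := by rw [h1]
      _ ≤ 2^q * B^q * (τ^n * M) := by
          apply mul_le_mul_of_nonneg_left _ (mul_nonneg h2q0 hBq0)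
          exact mul_le_mul_of_nonneg_right h2 hM0
  have hfinal1 : ∫ ξ, S ξ ^ q ∂ν ≤ 2^q * A^q + 2^q * B^q * (1 + τ^n * M) := by
    have := hmono
    rw [hc1] at this
    have hexp : 2^q * B^q * (1 + τ^n*M) = 2^q * B^q + 2^q * B^q * (τ^n*M) := by ring
    linarith [hc2WM]
  -- rpow arithmetic to reach the final form
  have hNq : ((N:ℝ))^(-q) ≤ ((N:ℝ))^(-(q/2)) :=
    Real.rpow_le_rpow_of_exponent_le (by exact_mod_cast hN) (by linarith)
  have hNhalf0 : (0:ℝ) ≤ ((N:ℝ))^(-(q/2)) := Real.rpow_nonneg hNpos.le _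
  have hδ2 : δ^2 = l^2 * ((N:ℝ))⁻¹ := by
    rw [hδ, div_pow, Real.sq_sqrt hNpos.le]
    ring
  have hKq : (K^2 : ℝ)^q = K^(2*q) := by
    rw [← Real.rpow_natCast K 2, ← Real.rpow_mul hK]
    norm_num
  have hlq : (l^2 : ℝ)^q = l^(2*q) := by
    rw [← Real.rpow_natCast l 2, ← Real.rpow_mul hl.le]
    norm_num
  have hAbound : 2^q * A^q ≤ 16^q * l^(2*q) * ((N:ℝ))^(-(q/2)) * (X^q + K^(2*q)) := by
    have h1 : A = (4 * l^2 * ((N:ℝ))⁻¹) * (X + K^2) := by rw [hA, hδ2]; ring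
    have hco : (0:ℝ) ≤ 4 * l^2 * ((N:ℝ))⁻¹ := by positivity
    have h2 : A^q = (4 * l^2 * ((N:ℝ))⁻¹)^q * (X + K^2)^q := by
      rw [h1, Real.mul_rpow hco (by positivity)]
    have h3 : (X + K^2)^q ≤ 2^q * (X^q + K^(2*q)) := by
      rw [← hKq]
      exact aux_rpow_add_le q hX0 (by positivity) hq0.le
    have h4 : (4 * l^2 * ((N:ℝ))⁻¹)^q = 4^q * l^(2*q) * ((N:ℝ))^(-q) := by
      rw [Real.mul_rpow (by positivity) (by positivity),
        Real.mul_rpow (by norm_num) (by positivity), hlq,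
        ← Real.rpow_neg_one ((N:ℝ)), ← Real.rpow_mul hNpos.le]
      norm_num
    have h5 : (0:ℝ) ≤ (4 * l^2 * ((N:ℝ))⁻¹)^q := Real.rpow_nonneg hco q
    have hXq0 : (0:ℝ) ≤ X^q := Real.rpow_nonneg hX0 q
    have hKq0 : (0:ℝ) ≤ K^(2*q) := Real.rpow_nonneg hK _
    have hlq0 : (0:ℝ) ≤ l^(2*q) := Real.rpow_nonneg hl.le _
    have h16 : (2:ℝ)^q * ((4:ℝ)^q * (2:ℝ)^q) = (16:ℝ)^q := by
      rw [← Real.mul_rpow (by norm_num) (by norm_num),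
        ← Real.mul_rpow (by norm_num) (by norm_num)]
      norm_num
    calc 2^q * A^q = 2^q * ((4 * l^2 * ((N:ℝ))⁻¹)^q * (X + K^2)^q) := by rw [h2]
      _ ≤ 2^q * ((4 * l^2 * ((N:ℝ))⁻¹)^q * (2^q * (X^q + K^(2*q)))) := by
          apply mul_le_mul_of_nonneg_left _ h2q0
          exact mul_le_mul_of_nonneg_left h3 h5
      _ = (2^q * (4^q * 2^q)) * l^(2*q) * ((N:ℝ))^(-q) * (X^q + K^(2*q)) := by
          rw [h4]; ring
      _ = 16^q * l^(2*q) * ((N:ℝ))^(-q) * (X^q + K^(2*q)) := by rw [h16]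
      _ ≤ 16^q * l^(2*q) * ((N:ℝ))^(-(q/2)) * (X^q + K^(2*q)) := by
          apply mul_le_mul_of_nonneg_right _ (by positivity)
          apply mul_le_mul_of_nonneg_left hNq
          positivity
  have hBval : 2^q * B^q = 8^q * l^q * ((N:ℝ))^(-(q/2)) := by
    have h8 : (2:ℝ)^q * (4:ℝ)^q = (8:ℝ)^q := by
      rw [← Real.mul_rpow (by norm_num) (by norm_num)]; norm_num
    have h1 : B = (4 * l) * ((N:ℝ))^(-(1/2:ℝ)) := by
      rw [hB, hδ, Real.sqrt_eq_rpow, div_eq_mul_inv, ← Real.rpow_neg hNpos.le]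
      ring
    have h2 : (((N:ℝ))^(-(1/2:ℝ)))^q = ((N:ℝ))^(-(q/2)) := by
      rw [← Real.rpow_mul hNpos.le]
      rw [show (-(1/2:ℝ))*q = -(q/2) by ring]
    rw [h1, Real.mul_rpow (by positivity) (Real.rpow_nonneg hNpos.le _),
      Real.mul_rpow (by norm_num) hl.le, h2, ← h8]
    ring
  -- conclude
  have hXq0 : (0:ℝ) ≤ X^q := Real.rpow_nonneg hX0 q
  have hKq0 : (0:ℝ) ≤ K^(2*q) := Real.rpow_nonneg hK _
  have hl2q0 : (0:ℝ) ≤ l^(2*q) := Real.rpow_nonneg hl.le _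
  have hlq0 : (0:ℝ) ≤ l^q := Real.rpow_nonneg hl.le _
  have h16q0 : (0:ℝ) ≤ (16:ℝ)^q := Real.rpow_nonneg (by norm_num) q
  have h8le : (8:ℝ)^q ≤ (16:ℝ)^q :=
    Real.rpow_le_rpow (by norm_num) (by norm_num) hq0.le
  have h8q0 : (0:ℝ) ≤ (8:ℝ)^q := Real.rpow_nonneg (by norm_num) q
  have hT0 : (0:ℝ) ≤ τ^n * M := mul_nonneg (pow_nonneg hτ n) hM0
  calc (∫ ξ, S ξ ^ q ∂ν) ≤ 2^q*A^q + 2^q*B^q*(1+τ^n*M) := hfinal1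
    _ ≤ 16^q * l^(2*q) * ((N:ℝ))^(-(q/2)) * (X^q + K^(2*q))
        + 8^q*l^q*((N:ℝ))^(-(q/2))*(1+τ^n*M) :=
        add_le_add hAbound (le_of_eq (by rw [hBval]))
    _ ≤ 16 ^ q * (l ^ (2*q) + l ^ q) * (1 + K ^ (2*q) + τ ^ n * M) *
        ((N:ℝ))^(-(q/2)) * (1 + X^q) := by
        have e1 : X^q + K^(2*q) ≤ (1+K^(2*q)+τ^n*M)*(1+X^q) :=
          aux_factor1 _ _ _ hXq0 hKq0 hT0
        have e2 : 1+τ^n*M ≤ (1+K^(2*q)+τ^n*M)*(1+X^q) :=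
          aux_factor2 _ _ _ hXq0 hKq0 hT0
        have f1 : 16^q * l^(2*q) * ((N:ℝ))^(-(q/2)) * (X^q + K^(2*q))
            ≤ 16^q * l^(2*q) * ((N:ℝ))^(-(q/2)) * ((1+K^(2*q)+τ^n*M)*(1+X^q)) :=
          mul_le_mul_of_nonneg_left e1 (by positivity)
        have f2 : 8^q*l^q*((N:ℝ))^(-(q/2))*(1+τ^n*M)
            ≤ 16^q*l^q*((N:ℝ))^(-(q/2))*((1+K^(2*q)+τ^n*M)*(1+X^q)) := by
          have g1 : 8^q*l^q*((N:ℝ))^(-(q/2))*(1+τ^n*M)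
              ≤ 8^q*l^q*((N:ℝ))^(-(q/2))*((1+K^(2*q)+τ^n*M)*(1+X^q)) :=
            mul_le_mul_of_nonneg_left e2 (by positivity)
          have g2 : 8^q*l^q*((N:ℝ))^(-(q/2))*((1+K^(2*q)+τ^n*M)*(1+X^q))
              ≤ 16^q*l^q*((N:ℝ))^(-(q/2))*((1+K^(2*q)+τ^n*M)*(1+X^q)) := by
            have hprod : (0:ℝ) ≤ (1+K^(2*q)+τ^n*M)*(1+X^q) := by positivity
            apply mul_le_mul_of_nonneg_right _ hprod
            apply mul_le_mul_of_nonneg_right _ hNhalf0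
            exact mul_le_mul_of_nonneg_right h8le hlq0
          linarith
        have hring : 16^q * l^(2*q) * ((N:ℝ))^(-(q/2)) * ((1+K^(2*q)+τ^n*M)*(1+X^q))
            + 16^q*l^q*((N:ℝ))^(-(q/2))*((1+K^(2*q)+τ^n*M)*(1+X^q))
            = 16 ^ q * (l ^ (2*q) + l ^ q) * (1 + K ^ (2*q) + τ ^ n * M) *
              ((N:ℝ))^(-(q/2)) * (1 + X^q) := by ring
        linarith
end

section
/- Fix a real number q ≥ 1/2 and reals ℓ > 0 and K ≥ 0. There exists a constant C > 0, depending only on q, ℓ and K, with the following property. For every natural number N ≥ 1, every λ : {1,…,N} → (0,∞), and every x, G ∈ ℝ^N with ∑_{j=1}^N λ_j² G_j² ≤ K², setting δ := ℓ·N^{−1/2}, S := N^{−1} ∑_{j=1}^N x_j²/λ_j², and, for ξ ∈ ℝ^N, y(ξ)_j := x_j − δ(x_j + λ_j² G_j) + √(2δ)·λ_j·ξ_j, one has ∫ ( ∑_{j=1}^N (y(ξ)_j − x_j)² / λ_j² )^q dμ_N(ξ) ≤ C · ( S^q + N^{q/2} ), where μ_N is the N-fold product of the standard Gaussian measure N(0,1)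 on ℝ. -/
open MeasureTheory ProbabilityTheory

lemma gauss_map_eval {N : ℕ} (j : Fin N) :
    Measure.map (Function.eval j) (Measure.pi fun _ : Fin N => gaussianReal 0 1)
      = gaussianReal 0 1 := by
  ext s hs
  rw [Measure.map_apply (measurable_pi_apply j) hs]
  have h : Function.eval j ⁻¹' s
      = Set.univ.pi (Function.update (fun _ : Fin N => (Set.univ : Set ℝ)) j s) :=
    Set.eval_preimage
  rw [h, Measure.pi_pi]
  rw [Finset.prod_eq_single j]
  · simp
  · intro i _ hij
    simp [Function.update_of_ne hij]
  · simp

lemma gauss_integrable_pow (k : ℕ) :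
    Integrable (fun t : ℝ => t ^ k) (gaussianReal 0 1) := by
  rw [gaussianReal_of_var_ne_zero 0 one_ne_zero,
    integrable_withDensity_iff (measurable_gaussianPDF 0 1)
      (Filter.Eventually.of_forall fun x => ENNReal.ofReal_lt_top)]
  have key : Integrable (fun x : ℝ => x ^ k * Real.exp (-(2⁻¹ : ℝ) * x ^ 2)) := by
    have h := integrable_rpow_mul_exp_neg_mul_sq (b := (2⁻¹ : ℝ)) (by norm_num)
      (s := (k : ℝ)) (lt_of_lt_of_le (by norm_num) (Nat.cast_nonneg k))
    simpa [Real.rpow_natCast] using h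
  have heq : (fun x : ℝ => x ^ k * (gaussianPDF 0 1 x).toReal)
      = fun x : ℝ => (Real.sqrt (2 * Real.pi * (1:ℝ)))⁻¹
          * (x ^ k * Real.exp (-(2⁻¹ : ℝ) * x ^ 2)) := by
    funext x
    rw [gaussianPDF, ENNReal.toReal_ofReal (gaussianPDFReal_nonneg _ _ _), gaussianPDFReal]
    push_cast
    ring_nf
  rw [heq]
  exact key.const_mul _

lemma gauss_pow_nonneg_int (n : ℕ) :
    0 ≤ ∫ t : ℝ, t ^ (2 * n) ∂(gaussianReal 0 1) :=
  integral_nonneg fun t => by rw [pow_mul]; positivity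

lemma rpow_add_le {a b p : ℝ} (ha : 0 ≤ a) (hb : 0 ≤ b) (hp : 0 ≤ p) :
    (a + b) ^ p ≤ 2 ^ p * (a ^ p + b ^ p) := by
  have h2p : (0:ℝ) ≤ 2 ^ p := Real.rpow_nonneg (by norm_num) p
  rcases le_total a b with h | h
  · calc (a + b) ^ p ≤ (2 * b) ^ p := Real.rpow_le_rpow (by linarith) (by linarith) hp
      _ = 2 ^ p * b ^ p := Real.mul_rpow (by norm_num) hb
      _ ≤ 2 ^ p * (a ^ p + b ^ p) := by
          have := Real.rpow_nonneg ha p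
          nlinarith
  · calc (a + b) ^ p ≤ (2 * a) ^ p := Real.rpow_le_rpow (by linarith) (by linarith) hp
      _ = 2 ^ p * a ^ p := Real.mul_rpow (by norm_num) ha
      _ ≤ 2 ^ p * (a ^ p + b ^ p) := by
          have := Real.rpow_nonneg hb p
          nlinarith

lemma rpow_add3_le {a b c p : ℝ} (ha : 0 ≤ a) (hb : 0 ≤ b) (hc : 0 ≤ c) (hp : 0 ≤ p) :
    (a + b + c) ^ p ≤ 4 ^ p * (a ^ p + b ^ p + c ^ p) := by
  have h1 := rpow_add_le (add_nonneg ha hb) hc hp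
  have h2 := rpow_add_le ha hb hp
  have h2p : (0:ℝ) ≤ 2 ^ p := Real.rpow_nonneg (by norm_num) p
  have h4 : (4:ℝ) ^ p = 2 ^ p * 2 ^ p := by
    rw [← Real.mul_rpow (by norm_num) (by norm_num)]; norm_num
  have h2one : (1:ℝ) ≤ 2 ^ p := Real.one_le_rpow (by norm_num) hp
  have hcp : 0 ≤ c ^ p := Real.rpow_nonneg hc p
  have k1 : 2 ^ p * ((a + b) ^ p + c ^ p) ≤ 2 ^ p * (2 ^ p * (a ^ p + b ^ p) + c ^ p) :=
    mul_le_mul_of_nonneg_left (by linarith) h2p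
  have k2 : 2 ^ p * (2 ^ p * (a ^ p + b ^ p) + c ^ p)
      = 4 ^ p * (a ^ p + b ^ p) + 2 ^ p * c ^ p := by rw [h4]; ring
  have k3 : 2 ^ p * c ^ p ≤ 4 ^ p * c ^ p := by
    rw [h4]
    calc 2 ^ p * c ^ p = 1 * (2 ^ p * c ^ p) := by ring
      _ ≤ 2 ^ p * (2 ^ p * c ^ p) :=
          mul_le_mul_of_nonneg_right h2one (mul_nonneg h2p hcp)
      _ = 2 ^ p * 2 ^ p * c ^ p := by ring
  linarith


lemma mala_per_term (d lamj xj Gj ξj : ℝ) (hlj : lamj ≠ 0) (hd0 : 0 ≤ d) :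
    ((xj - d * (xj + lamj ^ 2 * Gj) + Real.sqrt (2 * d) * lamj * ξj) - xj) ^ 2 / lamj ^ 2
      ≤ 3 * (d^2 * (xj ^ 2 / lamj ^ 2) + d^2 * (lamj ^ 2 * Gj ^ 2) + 2 * d * ξj ^ 2) := by
  have s2 : Real.sqrt (2*d) ^ 2 = 2*d := Real.sq_sqrt (by positivity)
  have key : ((xj - d * (xj + lamj ^ 2 * Gj) + Real.sqrt (2 * d) * lamj * ξj) - xj) ^ 2 / lamj ^ 2
      = (d * (xj / lamj) + d * (lamj * Gj) - Real.sqrt (2*d) * ξj) ^ 2 := by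
    field_simp
    ring
  rw [key]
  have hx2 : xj ^ 2 / lamj ^ 2 = (xj / lamj) ^ 2 := (div_pow _ _ _).symm
  rw [hx2]
  nlinarith [sq_nonneg (d * (xj / lamj) - d * (lamj * Gj)),
    sq_nonneg (d * (xj / lamj) + Real.sqrt (2*d) * ξj),
    sq_nonneg (d * (lamj * Gj) + Real.sqrt (2*d) * ξj), s2,
    sq_nonneg (Real.sqrt (2*d) * ξj)]

lemma mala_final_arith (t X1 X2 X3 Nh m Sq : ℝ) (ht : 0 ≤ t) (h1 : 0 ≤ X1)
    (h2 : 0 ≤ X2) (h3 : 0 ≤ X3) (hm : 0 ≤ m) (hNh : 1 ≤ Nh) (hSq : 0 ≤ Sq) :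
    t * (X1 * Sq + X2 + X3 * Nh) + t * X3 * Nh * m
      ≤ (t * (X1 + X2 + X3 * (1 + m)) + 1) * (Sq + Nh) := by
  nlinarith [mul_nonneg (mul_nonneg ht h1) (by linarith : (0:ℝ) ≤ Nh),
    mul_nonneg (mul_nonneg ht h2) hSq,
    mul_nonneg (mul_nonneg ht h2) (by linarith : (0:ℝ) ≤ Nh - 1),
    mul_nonneg (mul_nonneg (mul_nonneg ht h3) (by linarith : (0:ℝ) ≤ 1 + m)) hSq,
    hSq, (by linarith : (0:ℝ) ≤ Nh)]

/-- One-step jump-size estimate in the Cameron–Martin norm for the MALA proposal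
y = x − δ(x + C_N G) + √(2δ) λ ξ with δ = ℓ/√N:
E‖y − x‖_{C_N}^{2q} ≤ C (S^q + N^{q/2}), where S = N^{−1} ∑ x_j²/λ_j², uniformly over
N, λ, x, G with ∑ λ_j² G_j² ≤ K². -/
theorem mala_jump_size_cameron_martin (q l K : ℝ) (hq : 1 / 2 ≤ q) (hl : 0 < l)
    (hK : 0 ≤ K) :
    ∃ C : ℝ, 0 < C ∧
      ∀ (N : ℕ), 1 ≤ N →
      ∀ lam x G : Fin N → ℝ,
        (∀ j, 0 < lam j) →
        (∑ j, lam j ^ 2 * G j ^ 2) ≤ K ^ 2 →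
        (∫ ξ : Fin N → ℝ,
            (∑ j, ((x j - (l / Real.sqrt N) * (x j + lam j ^ 2 * G j)
                  + Real.sqrt (2 * (l / Real.sqrt N)) * lam j * ξ j) - x j) ^ 2
              / lam j ^ 2) ^ q
            ∂(Measure.pi fun _ : Fin N => gaussianReal 0 1)) ≤
          C * (((1 / (N : ℝ)) * ∑ j, x j ^ 2 / lam j ^ 2) ^ q
                + (N : ℝ) ^ (q / 2)) := by
  have hq0 : (0:ℝ) ≤ q := by linarith
  set n : ℕ := ⌈q⌉₊ with hn_def
  have hn1 : 1 ≤ n := Nat.one_le_ceil_iff.mpr (by linarith)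
  have hqn : q ≤ (n : ℝ) := Nat.le_ceil q
  clear_value n
  set m : ℝ := ∫ t : ℝ, t ^ (2 * n) ∂(gaussianReal 0 1) with hm_def
  have hm0 : 0 ≤ m := gauss_pow_nonneg_int n
  clear_value m
  have h12 : (0:ℝ) ≤ (12:ℝ) ^ q := Real.rpow_nonneg (by norm_num) q
  have hl2q : (0:ℝ) ≤ (l^2) ^ q := Real.rpow_nonneg (by positivity) q
  have hlKq : (0:ℝ) ≤ (l^2 * K^2) ^ q := Real.rpow_nonneg (by positivity) q
  have h2lq : (0:ℝ) ≤ (2*l) ^ q := Real.rpow_nonneg (by positivity) q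
  refine ⟨(12:ℝ)^q * ((l^2)^q + (l^2*K^2)^q + (2*l)^q * (1 + m)) + 1, by positivity, ?_⟩
  intro N hN lam x G hlam hG
  -- basic facts
  have hNpos : (0:ℝ) < N := by exact_mod_cast Nat.lt_of_lt_of_le Nat.zero_lt_one hN
  have hN1 : (1:ℝ) ≤ N := by exact_mod_cast hN
  have hsN1 : (1:ℝ) ≤ Real.sqrt N := Real.one_le_sqrt.mpr hN1
  set d : ℝ := l / Real.sqrt N with hd_def
  have hd : 0 < d := div_pos hl (by linarith)
  have hd2 : d ^ 2 = l ^ 2 / N := by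
    rw [hd_def, div_pow, Real.sq_sqrt hNpos.le]
  have hdl : d ≤ l := by
    rw [hd_def]
    exact div_le_self hl.le hsN1
  have s2d : Real.sqrt (2 * d) * Real.sqrt (2 * d) = 2 * d :=
    Real.mul_self_sqrt (by positivity)
  clear_value d
  set S : ℝ := (1 / (N:ℝ)) * ∑ j, x j ^ 2 / lam j ^ 2 with hS_def
  have hS0 : 0 ≤ S := by
    apply mul_nonneg (by positivity)
    exact Finset.sum_nonneg fun j _ => by positivity
  clear_value S
  set μN := (Measure.pi fun _ : Fin N => gaussianReal 0 1) with hμN_def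
  haveI : IsProbabilityMeasure μN := by rw [hμN_def]; infer_instance
  set Nh : ℝ := (N:ℝ) ^ (q/2) with hNh_def
  have hNh1 : 1 ≤ Nh := Real.one_le_rpow hN1 (by linarith)
  have hNh0 : 0 < Nh := lt_of_lt_of_le one_pos hNh1
  clear_value Nh
  -- integrability of coordinate powers
  have hint_j : ∀ j : Fin N, Integrable (fun ξ : Fin N → ℝ => (ξ j) ^ (2*n)) μN := by
    intro j
    have hmap := gauss_map_eval (N := N) j
    have hsm : AEStronglyMeasurable (fun t : ℝ => t ^ (2*n))
        (Measure.map (Function.eval j) μN) := by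
      rw [hμN_def, hmap]; exact (gauss_integrable_pow (2*n)).aestronglyMeasurable
    have h1 : Integrable (fun t : ℝ => t ^ (2*n)) (Measure.map (Function.eval j) μN) := by
      rw [hμN_def, hmap]; exact gauss_integrable_pow (2*n)
    exact (integrable_map_measure hsm (measurable_pi_apply j).aemeasurable).mp h1
  have hint_sum : Integrable (fun ξ : Fin N → ℝ => ∑ j, (ξ j) ^ (2*n)) μN :=
    integrable_finset_sum _ fun j _ => hint_j j
  have hIj : ∀ j : Fin N, (∫ ξ : Fin N → ℝ, (ξ j) ^ (2*n) ∂μN) = m := by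
    intro j
    have hmap := gauss_map_eval (N := N) j
    have hsm : AEStronglyMeasurable (fun t : ℝ => t ^ (2*n))
        (Measure.map (Function.eval j) μN) := by
      rw [hμN_def, hmap]; exact (gauss_integrable_pow (2*n)).aestronglyMeasurable
    have hmap' : Measure.map (Function.eval j) μN = gaussianReal 0 1 := by
      rw [hμN_def]; exact hmap
    rw [hm_def, ← hmap']
    exact (integral_map (φ := Function.eval j) (μ := μN)
      (measurable_pi_apply j).aemeasurable hsm).symm
  -- the dominating function
  set c0 : ℝ := (12:ℝ)^q * ((l^2)^q * S^q + (l^2*K^2)^q + (2*l)^q * Nh) with hc0_def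
  set c1 : ℝ := (12:ℝ)^q * (2*l)^q * Nh / N with hc1_def
  clear_value c0 c1
  have hg_int : Integrable (fun ξ : Fin N → ℝ => c0 + c1 * ∑ j, (ξ j) ^ (2*n)) μN :=
    (integrable_const c0).add (hint_sum.const_mul c1)
  -- pointwise bound
  have hpoint : ∀ ξ : Fin N → ℝ,
      (∑ j, ((x j - d * (x j + lam j ^ 2 * G j)
            + Real.sqrt (2 * d) * lam j * ξ j) - x j) ^ 2 / lam j ^ 2) ^ q
        ≤ c0 + c1 * ∑ j, (ξ j) ^ (2*n) := by
    intro ξ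
    set X : ℝ := ∑ j, (ξ j) ^ 2 with hX_def
    set W : ℝ := ∑ j, (ξ j) ^ (2*n) with hW_def
    have hX0 : 0 ≤ X := Finset.sum_nonneg fun j _ => sq_nonneg _
    have hW0 : 0 ≤ W := Finset.sum_nonneg fun j _ => by rw [pow_mul]; positivity
    have s2 : Real.sqrt (2*d) ^ 2 = 2*d := Real.sq_sqrt (by positivity)
    -- per-term bound
    have hterm : ∀ j : Fin N,
        ((x j - d * (x j + lam j ^ 2 * G j) + Real.sqrt (2 * d) * lam j * ξ j) - x j) ^ 2
            / lam j ^ 2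
          ≤ 3 * (d^2 * (x j ^ 2 / lam j ^ 2) + d^2 * (lam j ^ 2 * G j ^ 2)
              + 2 * d * (ξ j) ^ 2) := by
      intro j
      exact mala_per_term d (lam j) (x j) (G j) (ξ j) (hlam j).ne' hd.le
    -- sum bound
    have hA : (∑ j, ((x j - d * (x j + lam j ^ 2 * G j)
          + Real.sqrt (2 * d) * lam j * ξ j) - x j) ^ 2 / lam j ^ 2)
        ≤ 3 * (d^2 * (∑ j, x j ^ 2 / lam j ^ 2) + d^2 * K^2 + 2 * d * X) := by
      calc (∑ j, ((x j - d * (x j + lam j ^ 2 * G j)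
            + Real.sqrt (2 * d) * lam j * ξ j) - x j) ^ 2 / lam j ^ 2)
          ≤ ∑ j, 3 * (d^2 * (x j ^ 2 / lam j ^ 2) + d^2 * (lam j ^ 2 * G j ^ 2)
              + 2 * d * (ξ j) ^ 2) := Finset.sum_le_sum fun j _ => hterm j
        _ = 3 * (d^2 * (∑ j, x j ^ 2 / lam j ^ 2)
              + d^2 * (∑ j, lam j ^ 2 * G j ^ 2) + 2 * d * X) := by
            rw [hX_def, Finset.mul_sum, Finset.mul_sum, Finset.mul_sum, ← Finset.sum_add_distrib,
              ← Finset.sum_add_distrib, Finset.mul_sum]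
        _ ≤ 3 * (d^2 * (∑ j, x j ^ 2 / lam j ^ 2) + d^2 * K^2 + 2 * d * X) := by
            have := mul_le_mul_of_nonneg_left hG (sq_nonneg d)
            linarith
    have hA0 : 0 ≤ (∑ j, ((x j - d * (x j + lam j ^ 2 * G j)
          + Real.sqrt (2 * d) * lam j * ξ j) - x j) ^ 2 / lam j ^ 2) :=
      Finset.sum_nonneg fun j _ => by positivity
    set a1 : ℝ := d^2 * (∑ j, x j ^ 2 / lam j ^ 2) with ha1_def
    set a2 : ℝ := d^2 * K^2 with ha2_def
    set a3 : ℝ := 2 * d * X with ha3_def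
    have ha10 : 0 ≤ a1 := by
      apply mul_nonneg (sq_nonneg d) (Finset.sum_nonneg fun j _ => by positivity)
    have ha20 : 0 ≤ a2 := by positivity
    have ha30 : 0 ≤ a3 := by positivity
    have hT0 : 0 ≤ a1 + a2 + a3 := by linarith
    clear_value a1 a2 a3 X W
    -- rpow chain
    have step1 : (∑ j, ((x j - d * (x j + lam j ^ 2 * G j)
          + Real.sqrt (2 * d) * lam j * ξ j) - x j) ^ 2 / lam j ^ 2) ^ q
        ≤ (12:ℝ)^q * (a1^q + a2^q + a3^q) := by
      calc (∑ j, ((x j - d * (x j + lam j ^ 2 * G j)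
            + Real.sqrt (2 * d) * lam j * ξ j) - x j) ^ 2 / lam j ^ 2) ^ q
          ≤ (3 * (a1 + a2 + a3)) ^ q := Real.rpow_le_rpow hA0 hA hq0
        _ = 3^q * (a1 + a2 + a3)^q := Real.mul_rpow (by norm_num) hT0
        _ ≤ 3^q * (4^q * (a1^q + a2^q + a3^q)) := by
            exact mul_le_mul_of_nonneg_left (rpow_add3_le ha10 ha20 ha30 hq0)
              (Real.rpow_nonneg (by norm_num) q)
        _ = (12:ℝ)^q * (a1^q + a2^q + a3^q) := by
            rw [← mul_assoc, ← Real.mul_rpow (by norm_num) (by norm_num)]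
            norm_num
    -- bound each term
    have ha1q : a1^q = (l^2)^q * S^q := by
      have : a1 = l^2 * S := by
        rw [ha1_def, hS_def, hd2]; ring
      rw [this, Real.mul_rpow (by positivity) hS0]
    have ha2q : a2^q ≤ (l^2*K^2)^q := by
      apply Real.rpow_le_rpow ha20 _ hq0
      rw [ha2_def]
      exact mul_le_mul_of_nonneg_right (pow_le_pow_left₀ hd.le hdl 2) (sq_nonneg K)
    -- a3 bound
    have hXq : X^q ≤ (N:ℝ)^q * (1 + W / N) := by
      have hXN0 : 0 ≤ X / N := div_nonneg hX0 hNpos.le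
      have hXNn : (X / N) ^ (n:ℕ) ≤ W / N := by
        have hsucc : n - 1 + 1 = n := Nat.succ_pred_eq_of_pos hn1
        have hpm := pow_sum_div_card_le_sum_pow (s := (Finset.univ : Finset (Fin N)))
          (f := fun j => (ξ j)^2) (fun i _ => sq_nonneg _) (n - 1)
        rw [hsucc] at hpm
        simp only [Finset.card_univ, Fintype.card_fin] at hpm
        have hWe : (∑ j, ((ξ j)^2)^n) = W := by
          rw [hW_def]
          exact Finset.sum_congr rfl fun j _ => by rw [← pow_mul]
        rw [hWe, ← hX_def] at hpm
        -- hpm : X ^ n / N ^ (n-1) ≤ W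
        have hXn : X ^ n ≤ (N:ℝ)^(n-1) * W := by
          rw [div_le_iff₀ (by positivity)] at hpm
          linarith [hpm]
        rw [div_pow, div_le_div_iff₀ (by positivity) hNpos]
        calc X ^ n * N ≤ ((N:ℝ)^(n-1) * W) * N :=
              mul_le_mul_of_nonneg_right hXn hNpos.le
          _ = W * ((N:ℝ)^(n-1) * N) := by ring
          _ = W * (N:ℝ)^n := by rw [← pow_succ, hsucc]
      have hXNq : (X / N) ^ q ≤ 1 + W / N := by
        have hWN0 : 0 ≤ W / N := div_nonneg hW0 hNpos.le
        rcases le_total (X / N) 1 with h | h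
        · have : (X / N) ^ q ≤ 1 := Real.rpow_le_one hXN0 h hq0
          linarith
        · have h1 : (X / N) ^ q ≤ (X / N) ^ ((n:ℕ):ℝ) :=
            Real.rpow_le_rpow_of_exponent_le h hqn
          rw [Real.rpow_natCast] at h1
          linarith [hXNn]
      have hXeq : X = (N:ℝ) * (X / N) := by field_simp
      calc X ^ q = ((N:ℝ) * (X / N)) ^ q := by rw [← hXeq]
        _ = (N:ℝ)^q * (X / N)^q := Real.mul_rpow hNpos.le hXN0
        _ ≤ (N:ℝ)^q * (1 + W / N) :=
            mul_le_mul_of_nonneg_left hXNq (Real.rpow_nonneg hNpos.le q)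
    have hNq_split : (N:ℝ)^q = Nh * Nh := by
      rw [hNh_def, ← Real.rpow_add hNpos]
      norm_num
    have h2d : (2*d)^q = (2*l)^q / Nh := by
      have h2dd : 2*d = (2*l) / Real.sqrt N := by rw [hd_def]; ring
      rw [h2dd, Real.div_rpow (by positivity) (Real.sqrt_nonneg _), hNh_def,
        Real.sqrt_eq_rpow, ← Real.rpow_mul hNpos.le]
      congr 1
      ring
    have ha3q : a3^q ≤ (2*l)^q * Nh * (1 + W / N) := by
      have : a3^q = (2*d)^q * X^q := by
        rw [ha3_def]
        exact Real.mul_rpow (by positivity) hX0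
      rw [this, h2d]
      have hb : (2*l)^q / Nh * X^q ≤ (2*l)^q / Nh * ((N:ℝ)^q * (1 + W/N)) :=
        mul_le_mul_of_nonneg_left hXq (by positivity)
      calc (2*l)^q / Nh * X^q ≤ (2*l)^q / Nh * ((N:ℝ)^q * (1 + W/N)) := hb
        _ = (2*l)^q * Nh * (1 + W / N) := by
            rw [hNq_split]
            field_simp
    -- combine
    have hfinal : (12:ℝ)^q * (a1^q + a2^q + a3^q) ≤ c0 + c1 * W := by
      have e1 : c0 + c1 * W
          = (12:ℝ)^q * ((l^2)^q * S^q + (l^2*K^2)^q + (2*l)^q * Nh * (1 + W / N)) := by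
        rw [hc0_def, hc1_def]
        field_simp
        ring
      rw [e1, ha1q]
      apply mul_le_mul_of_nonneg_left _ h12
      have := ha2q
      have := ha3q
      linarith
    linarith [step1, hfinal]
  -- integrate
  have hmono : (∫ ξ : Fin N → ℝ,
      (∑ j, ((x j - d * (x j + lam j ^ 2 * G j)
            + Real.sqrt (2 * d) * lam j * ξ j) - x j) ^ 2 / lam j ^ 2) ^ q ∂μN)
      ≤ ∫ ξ : Fin N → ℝ, (c0 + c1 * ∑ j, (ξ j) ^ (2*n)) ∂μN := by
    apply integral_mono_of_nonneg
    · exact Filter.Eventually.of_forall fun ξ => by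
        apply Real.rpow_nonneg
        exact Finset.sum_nonneg fun j _ => by positivity
    · exact hg_int
    · exact Filter.Eventually.of_forall hpoint
  have hgval : (∫ ξ : Fin N → ℝ, (c0 + c1 * ∑ j, (ξ j) ^ (2*n)) ∂μN)
      = c0 + c1 * ((N:ℝ) * m) := by
    rw [integral_add (integrable_const c0) (hint_sum.const_mul c1),
      integral_const, integral_const_mul, integral_finset_sum _ fun j _ => hint_j j]
    simp only [measure_univ, probReal_univ, ENNReal.toReal_one, smul_eq_mul, one_mul]
    congr 1
    rw [Finset.sum_congr rfl fun j _ => hIj j]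
    simp [Finset.sum_const, mul_comm]
  -- final arithmetic
  have hAll : (∫ ξ : Fin N → ℝ,
      (∑ j, ((x j - d * (x j + lam j ^ 2 * G j)
            + Real.sqrt (2 * d) * lam j * ξ j) - x j) ^ 2 / lam j ^ 2) ^ q ∂μN)
      ≤ ((12:ℝ)^q * ((l^2)^q + (l^2*K^2)^q + (2*l)^q * (1 + m)) + 1) * (S^q + Nh) := by
    have hc1Nm : c1 * ((N:ℝ) * m) = (12:ℝ)^q * (2*l)^q * Nh * m := by
      rw [hc1_def]
      field_simp
    have hSq0 : 0 ≤ S^q := Real.rpow_nonneg hS0 q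
    have key : c0 + c1 * ((N:ℝ) * m)
        ≤ ((12:ℝ)^q * ((l^2)^q + (l^2*K^2)^q + (2*l)^q * (1 + m)) + 1) * (S^q + Nh) := by
      rw [hc0_def, hc1Nm]
      exact mala_final_arith ((12:ℝ)^q) ((l^2)^q) ((l^2*K^2)^q) ((2*l)^q)
        Nh m (S^q) h12 hl2q hlKq h2lq hm0 hNh1 hSq0
    exact le_trans hmono (le_trans (le_of_eq hgval) key)
  exact hAll
end
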